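/- Suppose Λ₁ and Λ₂ are integral lattices and φ : (C(Λ₁), ρ₁) → (C(Λ₂), −ρ₂) is an isomorphism of torsors with ℚ/2ℤ-valued maps. Then the glue lattice Λ₁ ⊕_φ Λ₂, formed using the group isomorphism Λ̄₁ → Λ̄₂ underlying φ, is an integral, unimodular lattice that contains Λ₁ and Λ₂ as complementary, primitive sublattices. -/

import Mathlib

set_option linter.unusedSectionVars false

open Matrix BigOperators

namespace Greene

/-- A rational number is an integer. -/
def isInt (q : ℚ) : Prop := ∃ m : ℤ, q = (m : ℚ)

section LatticeDefs

variable {ι : Type} [Fintype ι] [DecidableEq ι]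
variable {ι' : Type} [Fintype ι'] [DecidableEq ι']

/-- The bilinear form on `ι → ℚ` with (integral) Gram matrix `B`. -/
def qform (B : Matrix ι ι ℤ) (x y : ι → ℚ) : ℚ :=
  x ⬝ᵥ ((B.map (Int.cast : ℤ → ℚ)) *ᵥ y)

/-- The set of integer vectors: the standard lattice inside `ι → ℚ`. -/
def intVecs (ι : Type) [Fintype ι] [DecidableEq ι] : Set (ι → ℚ) :=
  {x | ∀ i, isInt (x i)}

lemma qform_zero_left (B : Matrix ι ι ℤ) (y : ι → ℚ) : qform B 0 y = 0 :=
  zero_dotProduct _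

lemma qform_add_left (B : Matrix ι ι ℤ) (x x' y : ι → ℚ) :
    qform B (x + x') y = qform B x y + qform B x' y := add_dotProduct _ _ _

lemma qform_neg_left (B : Matrix ι ι ℤ) (x y : ι → ℚ) :
    qform B (-x) y = -qform B x y := neg_dotProduct _ _

/-- The dual lattice `S* = {x ∈ span_ℚ S | ⟨x,y⟩ ∈ ℤ for all y ∈ S}`. -/
def dualOf (B : Matrix ι ι ℤ) (S : Set (ι → ℚ)) : AddSubgroup (ι → ℚ) where
  carrier := {x | x ∈ Submodule.span ℚ S ∧ ∀ y ∈ S, isInt (qform B x y)}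
  zero_mem' := ⟨Submodule.zero_mem _, fun y _ => ⟨0, by simp [qform_zero_left]⟩⟩
  add_mem' := by
    intro a b ha hb
    refine ⟨Submodule.add_mem _ ha.1 hb.1, fun y hy => ?_⟩
    obtain ⟨m, hm⟩ := ha.2 y hy
    obtain ⟨m', hm'⟩ := hb.2 y hy
    exact ⟨m + m', by rw [qform_add_left, hm, hm']; push_cast; ring⟩
  neg_mem' := by
    intro a ha
    refine ⟨Submodule.neg_mem _ ha.1, fun y hy => ?_⟩
    obtain ⟨m, hm⟩ := ha.2 y hy
    exact ⟨-m, by rw [qform_neg_left, hm]; push_cast; ring⟩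

/-- Characteristic covectors: `χ ∈ S*` with `⟨χ,y⟩ ≡ ⟨y,y⟩ (mod 2)` for all `y ∈ S`. -/
def CharOf (B : Matrix ι ι ℤ) (S : Set (ι → ℚ)) : Set (ι → ℚ) :=
  {χ | χ ∈ dualOf B S ∧ ∀ y ∈ S, ∃ m : ℤ, qform B χ y - qform B y y = 2 * (m : ℚ)}

/-- Two covectors are in the same class mod `2S`. -/
def SameClass (S : Set (ι → ℚ)) (χ χ' : ι → ℚ) : Prop :=
  ∃ y ∈ S, χ' = χ + (2 : ℚ) • y

/-- Short characteristic covectors: minimal norm in their class mod `2S`. -/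
def ShortOf (B : Matrix ι ι ℤ) (S : Set (ι → ℚ)) : Set (ι → ℚ) :=
  {χ | χ ∈ CharOf B S ∧ ∀ χ' ∈ CharOf B S, SameClass S χ χ' → qform B χ χ ≤ qform B χ' χ'}

/-- Rank of a lattice: dimension of its rational span. -/
noncomputable def rkOf (S : Set (ι → ℚ)) : ℕ := Module.finrank ℚ (Submodule.span ℚ S)

/-- The lattice `S` sitting inside its dual. -/
def latIn (B : Matrix ι ι ℤ) (S : Set (ι → ℚ)) : AddSubgroup (dualOf B S) :=
  AddSubgroup.closure {x | (x : ι → ℚ) ∈ S}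

/-- The discriminant group `S*/S`. -/
def disc (B : Matrix ι ι ℤ) (S : Set (ι → ℚ)) : Type :=
  dualOf B S ⧸ latIn B S

noncomputable instance (B : Matrix ι ι ℤ) (S : Set (ι → ℚ)) : AddCommGroup (disc B S) :=
  inferInstanceAs (AddCommGroup (dualOf B S ⧸ latIn B S))

/-- The class of a dual vector in the discriminant group. -/
def dmk (B : Matrix ι ι ℤ) (S : Set (ι → ℚ)) {x : ι → ℚ} (hx : x ∈ dualOf B S) :
    disc B S := QuotientAddGroup.mk (⟨x, hx⟩ : dualOf B S)

/-- `S` is an additive subgroup (a sublattice, when contained in a lattice). -/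
def IsLat (S : Set (ι → ℚ)) : Prop :=
  (0 : ι → ℚ) ∈ S ∧ ∀ x ∈ S, ∀ y ∈ S, x - y ∈ S

/-- The form is integer valued on `S`. -/
def IntegralOn (B : Matrix ι ι ℤ) (S : Set (ι → ℚ)) : Prop :=
  ∀ x ∈ S, ∀ y ∈ S, isInt (qform B x y)

/-- Unimodularity: the dual lattice equals the lattice. -/
def UnimodularOn (B : Matrix ι ι ℤ) (S : Set (ι → ℚ)) : Prop :=
  ((dualOf B S : AddSubgroup (ι → ℚ)) : Set (ι → ℚ)) = S

/-- Positive definiteness of the form on the span of `S`. -/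
def PosDefOn (B : Matrix ι ι ℤ) (S : Set (ι → ℚ)) : Prop :=
  ∀ x ∈ Submodule.span ℚ S, x ≠ 0 → 0 < qform B x x

/-- Orthogonality of two sublattices. -/
def OrthogonalSets (B : Matrix ι ι ℤ) (S T : Set (ι → ℚ)) : Prop :=
  ∀ x ∈ S, ∀ y ∈ T, qform B x y = 0

/-- `S, T` are complementary sublattices of `L`: orthogonal with ranks summing to `rk L`. -/
noncomputable def ComplementaryIn (B : Matrix ι ι ℤ) (L S T : Set (ι → ℚ)) : Prop :=
  OrthogonalSets B S T ∧ rkOf S + rkOf T = rkOf L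

/-- `S ⊆ L` is a primitive sublattice: the restriction map `L* → S*` surjects. -/
def PrimitiveIn (B : Matrix ι ι ℤ) (L S : Set (ι → ℚ)) : Prop :=
  ∀ x ∈ dualOf B S, ∃ z ∈ dualOf B L, ∀ u ∈ S, qform B z u = qform B x u

/-- `s` is the signature of the form restricted to the span of `S` (Sylvester form). -/
def IsSignatureOf (B : Matrix ι ι ℤ) (S : Set (ι → ℚ)) (s : ℤ) : Prop :=
  ∃ (p q : ℕ) (v : Fin (p + q) → (ι → ℚ)),
    (∀ i, v i ∈ Submodule.span ℚ S) ∧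
    Submodule.span ℚ (Set.range v) = Submodule.span ℚ S ∧
    LinearIndependent ℚ v ∧
    (∀ i j, i ≠ j → qform B (v i) (v j) = 0) ∧
    (∀ i : Fin (p + q),
      if (i : ℕ) < p then 0 < qform B (v i) (v i) else qform B (v i) (v i) < 0) ∧
    s = (p : ℤ) - (q : ℤ)

/-- `S` admits an orthonormal basis of `n` elements, i.e. `S ≅ ℤⁿ`. -/
def HasOrthonormalBasis (B : Matrix ι ι ℤ) (S : Set (ι → ℚ)) (n : ℕ) : Prop :=
  ∃ v : Fin n → (ι → ℚ), (∀ i, v i ∈ S) ∧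
    (∀ i j, qform B (v i) (v j) = if i = j then 1 else 0) ∧
    (∀ x ∈ S, ∃ c : Fin n → ℤ, x = ∑ i, (c i : ℚ) • v i)

/-- Isomorphism of lattices: an additive bijection preserving the forms. -/
def LatIso (B : Matrix ι ι ℤ) (S : Set (ι → ℚ)) (B' : Matrix ι' ι' ℤ) (S' : Set (ι' → ℚ)) :
    Prop :=
  ∃ f : (ι → ℚ) → (ι' → ℚ), Set.BijOn f S S' ∧
    (∀ x ∈ S, ∀ y ∈ S, f (x + y) = f x + f y) ∧
    (∀ x ∈ S, ∀ y ∈ S, qform B' (f x) (f y) = qform B x y)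

/-- An isomorphism of the torsors `C(S₁) → C(S₂)` (given on representatives by `Φ`),
covering the group isomorphism `ψ` of discriminant groups. -/
def TorsorMapIso (B₁ : Matrix ι ι ℤ) (S₁ : Set (ι → ℚ))
    (B₂ : Matrix ι' ι' ℤ) (S₂ : Set (ι' → ℚ))
    (Φ : (ι → ℚ) → (ι' → ℚ)) (ψ : disc B₁ S₁ ≃+ disc B₂ S₂) : Prop :=
  (∀ χ ∈ CharOf B₁ S₁, Φ χ ∈ CharOf B₂ S₂) ∧
  (∀ χ ∈ CharOf B₁ S₁, ∀ χ' ∈ CharOf B₁ S₁,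
    (SameClass S₁ χ χ' ↔ SameClass S₂ (Φ χ) (Φ χ'))) ∧
  (∀ μ ∈ CharOf B₂ S₂, ∃ χ ∈ CharOf B₁ S₁, SameClass S₂ (Φ χ) μ) ∧
  (∀ χ ∈ CharOf B₁ S₁, ∀ χ' ∈ CharOf B₁ S₁,
    ∀ (x : ι → ℚ) (y : ι' → ℚ) (hx : x ∈ dualOf B₁ S₁) (hy : y ∈ dualOf B₂ S₂),
      χ' = χ + (2 : ℚ) • x → Φ χ' = Φ χ + (2 : ℚ) • y →
      ψ (dmk B₁ S₁ hx) = dmk B₂ S₂ hy)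

/-- Compatibility of `Φ` with the `d`-invariants: `d₂([Φ χ]) = ε · d₁([χ])`,
where `d` is the minimum of `(|χ'|² - rk)/4` over the class. -/
noncomputable def DCompat (B₁ : Matrix ι ι ℤ) (S₁ : Set (ι → ℚ))
    (B₂ : Matrix ι' ι' ℤ) (S₂ : Set (ι' → ℚ))
    (ε : ℚ) (Φ : (ι → ℚ) → (ι' → ℚ)) : Prop :=
  ∀ χ ∈ CharOf B₁ S₁, ∀ q : ℚ,
    IsLeast {t | ∃ χ' ∈ CharOf B₁ S₁, SameClass S₁ χ χ' ∧
      t = (qform B₁ χ' χ' - (rkOf S₁ : ℚ)) / 4} q →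
    IsLeast {t | ∃ μ ∈ CharOf B₂ S₂, SameClass S₂ (Φ χ) μ ∧
      t = (qform B₂ μ μ - (rkOf S₂ : ℚ)) / 4} (ε * q)

/-- Compatibility of `Φ` with the `ρ`-invariants: `ρ₂([Φ χ]) ≡ ε · ρ₁([χ]) (mod 2)`. -/
def RhoCompat (B₁ : Matrix ι ι ℤ) (S₁ : Set (ι → ℚ))
    (B₂ : Matrix ι' ι' ℤ) (S₂ : Set (ι' → ℚ))
    (ε : ℚ) (Φ : (ι → ℚ) → (ι' → ℚ)) : Prop :=
  ∀ χ ∈ CharOf B₁ S₁, ∀ s₁ s₂ : ℤ, IsSignatureOf B₁ S₁ s₁ → IsSignatureOf B₂ S₂ s₂ →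
    ∃ m : ℤ, (qform B₂ (Φ χ) (Φ χ) - (s₂ : ℚ)) / 4 - ε * ((qform B₁ χ χ - (s₁ : ℚ)) / 4)
      = 2 * (m : ℚ)

/-- The `d`-invariants `(C(S₁), d₁)` and `(C(S₂), ε·d₂)` are isomorphic. -/
noncomputable def DIso (B₁ : Matrix ι ι ℤ) (S₁ : Set (ι → ℚ))
    (B₂ : Matrix ι' ι' ℤ) (S₂ : Set (ι' → ℚ)) (ε : ℚ) : Prop :=
  ∃ (Φ : (ι → ℚ) → (ι' → ℚ)) (ψ : disc B₁ S₁ ≃+ disc B₂ S₂),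
    TorsorMapIso B₁ S₁ B₂ S₂ Φ ψ ∧ DCompat B₁ S₁ B₂ S₂ ε Φ

end LatticeDefs

/-- An abstract integral lattice, presented by its Gram matrix. -/
structure IntLattice where
  n : ℕ
  B : Matrix (Fin n) (Fin n) ℤ
  symm : B.IsSymm
  nondeg : B.det ≠ 0

/-- The Gram matrix of the orthogonal direct sum `Λ₁ ⊥ Λ₂`. -/
def glueGram (L₁ L₂ : IntLattice) :
    Matrix (Fin L₁.n ⊕ Fin L₂.n) (Fin L₁.n ⊕ Fin L₂.n) ℤ :=
  Matrix.fromBlocks L₁.B 0 0 L₂.B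

/-- The glue lattice `Λ₁ ⊕_ψ Λ₂ = {x + y ∈ Λ₁* ⊕ Λ₂* : ψ(x̄) = ȳ}`. -/
def glueSet (L₁ L₂ : IntLattice)
    (ψ : disc L₁.B (intVecs (Fin L₁.n)) ≃+ disc L₂.B (intVecs (Fin L₂.n))) :
    Set (Fin L₁.n ⊕ Fin L₂.n → ℚ) :=
  {w | ∃ (h₁ : (w ∘ Sum.inl) ∈ dualOf L₁.B (intVecs (Fin L₁.n)))
        (h₂ : (w ∘ Sum.inr) ∈ dualOf L₂.B (intVecs (Fin L₂.n))),
        ψ (dmk _ _ h₁) = dmk _ _ h₂}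

/-- `Λ₁` embedded in the first factor of `Λ₁* ⊕ Λ₂*`. -/
def inlLat (L₁ L₂ : IntLattice) : Set (Fin L₁.n ⊕ Fin L₂.n → ℚ) :=
  {w | (w ∘ Sum.inl) ∈ intVecs (Fin L₁.n) ∧ w ∘ Sum.inr = 0}

/-- `Λ₂` embedded in the second factor of `Λ₁* ⊕ Λ₂*`. -/
def inrLat (L₁ L₂ : IntLattice) : Set (Fin L₁.n ⊕ Fin L₂.n → ℚ) :=
  {w | (w ∘ Sum.inr) ∈ intVecs (Fin L₂.n) ∧ w ∘ Sum.inl = 0}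

/-- Stabilization `S ⊕ ℤᵏ`. -/
def stabSet {ι : Type} [Fintype ι] [DecidableEq ι] (S : Set (ι → ℚ)) (k : ℕ) :
    Set (ι ⊕ Fin k → ℚ) :=
  {w | (w ∘ Sum.inl) ∈ S ∧ ∀ j, isInt (w (Sum.inr j))}

/-- A finite loopless multigraph, with a reference orientation of each edge. -/
structure MultiGraph where
  nV : ℕ
  nE : ℕ
  hd : Fin nE → Fin nV
  tl : Fin nE → Fin nV
  loopless : ∀ e, hd e ≠ tl e

namespace MultiGraph

/-- The boundary map `C₁(G;ℚ) → C₀(G;ℚ)`, `∂ e = head(e) − tail(e)`. -/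
def bndry (G : MultiGraph) (x : Fin G.nE → ℚ) : Fin G.nV → ℚ :=
  fun v => ∑ e, x e * ((if G.hd e = v then 1 else 0) - (if G.tl e = v then 1 else 0))

/-- The flow lattice `ℱ(G) = ker ∂ ∩ C₁(G;ℤ)`. -/
def flowSet (G : MultiGraph) : Set (Fin G.nE → ℚ) :=
  {x | (∀ e, isInt (x e)) ∧ G.bndry x = 0}

/-- The cut lattice `𝒞(G) = im ∂* ∩ C₁(G;ℤ)`. -/
def cutSet (G : MultiGraph) : Set (Fin G.nE → ℚ) :=
  {x | (∀ e, isInt (x e)) ∧ ∃ g : Fin G.nV → ℚ, ∀ e, x e = g (G.hd e) - g (G.tl e)}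

/-- Reachability using only edges from the set `A`. -/
def ReachIn (G : MultiGraph) (A : Set (Fin G.nE)) : Fin G.nV → Fin G.nV → Prop :=
  Relation.ReflTransGen
    (fun u v => ∃ e ∈ A, (G.hd e = u ∧ G.tl e = v) ∨ (G.hd e = v ∧ G.tl e = u))

def Connected (G : MultiGraph) : Prop := ∀ u v, G.ReachIn Set.univ u v

/-- 2-edge-connectedness: connected, and removing any one edge leaves it connected. -/
def TwoEdgeConnected (G : MultiGraph) : Prop :=
  G.Connected ∧ ∀ e : Fin G.nE, ∀ u v, G.ReachIn {e}ᶜ u v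

/-- `C` is the edge set of a cycle of `G`. -/
def IsCycleEdgeSet (G : MultiGraph) (C : Set (Fin G.nE)) : Prop :=
  ∃ k : ℕ, 0 < k ∧ ∃ (e : Fin k → Fin G.nE) (v : Fin k → Fin G.nV),
    Function.Injective e ∧ Function.Injective v ∧ C = Set.range e ∧
    ∀ i, (G.hd (e i) = v (finRotate k i) ∧ G.tl (e i) = v i) ∨
         (G.tl (e i) = v (finRotate k i) ∧ G.hd (e i) = v i)

/-- A maximal spanning forest: acyclic and realizing all of `G`'s reachability. -/
def IsMaxForest (G : MultiGraph) (F : Finset (Fin G.nE)) : Prop :=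
  (∀ C, G.IsCycleEdgeSet C → ¬(C ⊆ (↑F : Set (Fin G.nE)))) ∧
  ∀ u v, G.ReachIn Set.univ u v → G.ReachIn (↑F) u v

open Classical in
/-- The fundamental cut vector of `e ∈ F`:
`+1` on edges leaving the component `K₁` of the tail of `e` in `F − e`,
`−1` on edges entering it, `0` otherwise. -/
noncomputable def cutVec (G : MultiGraph) (F : Finset (Fin G.nE)) (e : Fin G.nE) :
    Fin G.nE → ℚ := fun j =>
  (if G.ReachIn (↑(F.erase e)) (G.tl j) (G.tl e) then 1 else 0)
    - (if G.ReachIn (↑(F.erase e)) (G.hd j) (G.tl e) then 1 else 0)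

/-- `x` is the fundamental cycle vector of `e ∉ F`: the unique flow supported on
`F ∪ {e}` whose coefficient on `e` is `+1`. -/
def IsFundCycleVec (G : MultiGraph) (F : Finset (Fin G.nE)) (e : Fin G.nE)
    (x : Fin G.nE → ℚ) : Prop :=
  G.bndry x = 0 ∧ (∀ j, j ∉ F → j ≠ e → x j = 0) ∧ x e = 1

/-- Reorienting the edges of `G`: `o e = true` keeps the reference direction. -/
def reorient (G : MultiGraph) (o : Fin G.nE → Bool) : MultiGraph :=
  { G with
    hd := fun e => if o e then G.hd e else G.tl e
    tl := fun e => if o e then G.tl e else G.hd e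
    loopless := by
      intro e
      by_cases h : o e = true
      · simpa [h] using G.loopless e
      · simpa [h] using (G.loopless e).symm }

end MultiGraph

/-- A 2-isomorphism: a bijection of edge sets preserving edge sets of cycles. -/
def TwoIsomorphic (G G' : MultiGraph) : Prop :=
  ∃ σ : Fin G.nE ≃ Fin G'.nE, ∀ C, G.IsCycleEdgeSet C ↔ G'.IsCycleEdgeSet (σ '' C)

section Aux1

lemma isInt_intCast (m : ℤ) : isInt (m : ℚ) := ⟨m, rfl⟩

lemma isInt_zero : isInt (0 : ℚ) := ⟨0, by norm_num⟩

lemma isInt_add {a b : ℚ} (ha : isInt a) (hb : isInt b) : isInt (a + b) := by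
  obtain ⟨m, rfl⟩ := ha; obtain ⟨k, rfl⟩ := hb; exact ⟨m + k, by push_cast; ring⟩

lemma isInt_neg {a : ℚ} (ha : isInt a) : isInt (-a) := by
  obtain ⟨m, rfl⟩ := ha; exact ⟨-m, by push_cast; ring⟩

lemma isInt_sub {a b : ℚ} (ha : isInt a) (hb : isInt b) : isInt (a - b) := by
  obtain ⟨m, rfl⟩ := ha; obtain ⟨k, rfl⟩ := hb; exact ⟨m - k, by push_cast; ring⟩

lemma isInt_mul {a b : ℚ} (ha : isInt a) (hb : isInt b) : isInt (a * b) := by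
  obtain ⟨m, rfl⟩ := ha; obtain ⟨k, rfl⟩ := hb; exact ⟨m * k, by push_cast; ring⟩

lemma isInt_sum {α : Type*} (s : Finset α) (f : α → ℚ) (h : ∀ i ∈ s, isInt (f i)) :
    isInt (∑ i ∈ s, f i) :=
  Finset.sum_induction f isInt (fun _ _ ha hb => isInt_add ha hb) isInt_zero h

variable {ι : Type} [Fintype ι] [DecidableEq ι]

lemma qform_apply (B : Matrix ι ι ℤ) (x y : ι → ℚ) :
    qform B x y = ∑ i, x i * ∑ j, (B i j : ℚ) * y j := by
  simp [qform, dotProduct, Matrix.mulVec, Matrix.map_apply]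

lemma qform_add_right (B : Matrix ι ι ℤ) (x y y' : ι → ℚ) :
    qform B x (y + y') = qform B x y + qform B x y' := by
  unfold qform; rw [Matrix.mulVec_add, dotProduct_add]

lemma qform_neg_right (B : Matrix ι ι ℤ) (x y : ι → ℚ) :
    qform B x (-y) = -qform B x y := by
  unfold qform; rw [Matrix.mulVec_neg, dotProduct_neg]

lemma qform_sub_right (B : Matrix ι ι ℤ) (x y y' : ι → ℚ) :
    qform B x (y - y') = qform B x y - qform B x y' := by
  rw [sub_eq_add_neg, qform_add_right, qform_neg_right, sub_eq_add_neg]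

lemma qform_sub_left (B : Matrix ι ι ℤ) (x x' y : ι → ℚ) :
    qform B (x - x') y = qform B x y - qform B x' y := by
  rw [sub_eq_add_neg, qform_add_left, qform_neg_left, sub_eq_add_neg]

lemma qform_smul_left (B : Matrix ι ι ℤ) (c : ℚ) (x y : ι → ℚ) :
    qform B (c • x) y = c * qform B x y := smul_dotProduct c x _

lemma qform_smul_right (B : Matrix ι ι ℤ) (c : ℚ) (x y : ι → ℚ) :
    qform B x (c • y) = c * qform B x y := by
  unfold qform; rw [Matrix.mulVec_smul, dotProduct_smul, smul_eq_mul]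

lemma qform_zero_right (B : Matrix ι ι ℤ) (x : ι → ℚ) : qform B x 0 = 0 := by
  unfold qform; rw [Matrix.mulVec_zero, dotProduct_zero]

lemma qform_symm {B : Matrix ι ι ℤ} (hB : B.IsSymm) (x y : ι → ℚ) :
    qform B x y = qform B y x := by
  have hBq : (B.map (Int.cast : ℤ → ℚ)).IsSymm := hB.map _
  unfold qform
  rw [dotProduct_mulVec, ← Matrix.mulVec_transpose, hBq.eq, dotProduct_comm]

/-- `Pi.single i 1` is an integer vector. -/
lemma single_mem_intVecs (i : ι) : Pi.single i (1 : ℚ) ∈ intVecs ι := by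
  intro j
  rcases eq_or_ne j i with rfl | h
  · rw [Pi.single_eq_same]; exact ⟨1, by norm_num⟩
  · rw [Pi.single_eq_of_ne h]; exact isInt_zero

lemma ite_single_eq (i : ι) :
    (fun j => if i = j then (1 : ℚ) else 0) = Pi.single i 1 := by
  funext j
  rw [Pi.single_apply]
  by_cases h : i = j
  · simp [h]
  · simp [h, Ne.symm h]

lemma span_intVecs : Submodule.span ℚ (intVecs ι) = ⊤ := by
  rw [eq_top_iff]
  intro x _
  rw [pi_eq_sum_univ x]
  refine Submodule.sum_mem _ fun i _ => Submodule.smul_mem _ _ ?_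
  refine Submodule.subset_span ?_
  rw [ite_single_eq]
  exact single_mem_intVecs i

lemma intVecs_zero : (0 : ι → ℚ) ∈ intVecs ι := fun _ => isInt_zero

lemma intVecs_sub {x y : ι → ℚ} (hx : x ∈ intVecs ι) (hy : y ∈ intVecs ι) :
    x - y ∈ intVecs ι := fun i => isInt_sub (hx i) (hy i)

lemma intVecs_add {x y : ι → ℚ} (hx : x ∈ intVecs ι) (hy : y ∈ intVecs ι) :
    x + y ∈ intVecs ι := fun i => isInt_add (hx i) (hy i)

lemma intVecs_neg {x : ι → ℚ} (hx : x ∈ intVecs ι) : -x ∈ intVecs ι :=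
  fun i => isInt_neg (hx i)

lemma mem_dual_iff {B : Matrix ι ι ℤ} {x : ι → ℚ} :
    x ∈ dualOf B (intVecs ι) ↔ ∀ y ∈ intVecs ι, isInt (qform B x y) := by
  constructor
  · exact fun h => h.2
  · intro h
    exact ⟨by rw [span_intVecs]; trivial, h⟩

lemma intVecs_mem_dual {B : Matrix ι ι ℤ} {x : ι → ℚ} (hx : x ∈ intVecs ι) :
    x ∈ dualOf B (intVecs ι) := by
  rw [mem_dual_iff]
  intro y hy
  rw [qform_apply]
  refine isInt_sum _ _ fun i _ => isInt_mul (hx i) (isInt_sum _ _ fun j _ => ?_)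
  exact isInt_mul (isInt_intCast _) (hy j)

lemma isInt_dotProduct {x y : ι → ℚ} (hx : x ∈ intVecs ι) (hy : y ∈ intVecs ι) :
    isInt (x ⬝ᵥ y) :=
  isInt_sum _ _ fun i _ => isInt_mul (hx i) (hy i)

end Aux1
section Aux2

variable {ι : Type} [Fintype ι] [DecidableEq ι]

lemma det_map_isUnit {B : Matrix ι ι ℤ} (hd : B.det ≠ 0) :
    IsUnit (B.map (Int.cast : ℤ → ℚ)).det := by
  have h : (B.map (Int.cast : ℤ → ℚ)).det = ((B.det : ℤ) : ℚ) :=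
    (RingHom.map_det (Int.castRingHom ℚ) B).symm
  rw [h]
  exact isUnit_iff_ne_zero.2 (by exact_mod_cast hd)

/-- The key computation: pairing `B⁻¹ v` against `z` gives `v ⬝ᵥ z`. -/
lemma qform_inv_mulVec {B : Matrix ι ι ℤ} (hB : B.IsSymm) (hd : B.det ≠ 0)
    (v z : ι → ℚ) :
    qform B ((B.map (Int.cast : ℤ → ℚ))⁻¹ *ᵥ v) z = v ⬝ᵥ z := by
  set Bq := B.map (Int.cast : ℤ → ℚ) with hBq
  have hsym : Bq.IsSymm := hB.map _
  unfold qform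
  rw [← hBq, dotProduct_mulVec, ← Matrix.mulVec_transpose, hsym.eq,
    Matrix.mulVec_mulVec, Matrix.mul_nonsing_inv _ (det_map_isUnit hd),
    Matrix.one_mulVec]

lemma inv_mulVec_mem_dual {B : Matrix ι ι ℤ} (hB : B.IsSymm) (hd : B.det ≠ 0)
    {v : ι → ℚ} (hv : v ∈ intVecs ι) :
    (B.map (Int.cast : ℤ → ℚ))⁻¹ *ᵥ v ∈ dualOf B (intVecs ι) := by
  rw [mem_dual_iff]
  intro y hy
  rw [qform_inv_mulVec hB hd]
  exact isInt_dotProduct hv hy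

/-- Double duality: a vector pairing integrally with the whole dual lattice is integral. -/
lemma mem_intVecs_of_dual_pairing {B : Matrix ι ι ℤ} (hB : B.IsSymm) (hd : B.det ≠ 0)
    {x : ι → ℚ} (h : ∀ y ∈ dualOf B (intVecs ι), isInt (qform B x y)) :
    x ∈ intVecs ι := by
  intro i
  have hy : (B.map (Int.cast : ℤ → ℚ))⁻¹ *ᵥ Pi.single i 1 ∈ dualOf B (intVecs ι) :=
    inv_mulVec_mem_dual hB hd (single_mem_intVecs i)
  have := h _ hy
  rwa [qform_symm hB, qform_inv_mulVec hB hd, single_dotProduct, one_mul] at this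

/-- Parity: `∑ᵢⱼ mᵢ Bᵢⱼ mⱼ ≡ ∑ᵢ Bᵢᵢ mᵢ (mod 2)` for a symmetric integer matrix. -/
lemma diag_parity {B : Matrix ι ι ℤ} (hB : B.IsSymm) (m : ι → ℤ) :
    ∃ k : ℤ, ∑ i, B i i * m i - ∑ i, ∑ j, m i * B i j * m j = 2 * k := by
  have h2 : (2 : ℤ) ∣ (∑ i, B i i * m i - ∑ i, ∑ j, m i * B i j * m j) := by
    have hcast := (ZMod.intCast_zmod_eq_zero_iff_dvd
      (∑ i, B i i * m i - ∑ i, ∑ j, m i * B i j * m j) 2).1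
    refine (ZMod.intCast_zmod_eq_zero_iff_dvd _ 2).1 ?_
    push_cast
    rw [sub_eq_zero]
    -- goal : ∑ i, (B i i : ZMod 2) * m i = ∑ i, ∑ j, (m i) * B i j * m j
    have key : (∑ i, ∑ j, ((m i : ZMod 2) * (B i j : ZMod 2) * (m j : ZMod 2)))
        = ∑ i, (B i i : ZMod 2) * (m i : ZMod 2) := by
      set f : ι × ι → ZMod 2 := fun p => (m p.1 : ZMod 2) * (B p.1 p.2 : ZMod 2) * (m p.2 : ZMod 2)
        with hf
      have hprod : (∑ i, ∑ j, ((m i : ZMod 2) * (B i j : ZMod 2) * (m j : ZMod 2)))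
          = ∑ p ∈ (Finset.univ ×ˢ Finset.univ), f p := by
        rw [Finset.sum_product]
      rw [hprod, Finset.univ_product_univ,
        ← Finset.sum_filter_add_sum_filter_not Finset.univ (fun p : ι × ι => p.1 = p.2) f]
      have hoff : ∑ p ∈ Finset.univ.filter (fun p : ι × ι => ¬ p.1 = p.2), f p = 0 := by
        refine Finset.sum_involution (fun p _ => (p.2, p.1)) ?_ ?_ ?_ ?_
        · intro p _
          have hsymm : f (p.2, p.1) = f p := by
            simp only [hf]
            rw [hB.apply p.1 p.2]
            ring
          rw [hsymm]
          exact (by decide : ∀ x : ZMod 2, x + x = 0) _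
        · intro p hp _
          intro hc
          exact (Finset.mem_filter.1 hp).2 (congrArg Prod.fst hc).symm
        · intro p hp
          have := Finset.mem_filter.1 hp
          exact Finset.mem_filter.2 ⟨Finset.mem_univ _, fun hc => this.2 hc.symm⟩
        · intro p _
          rfl
      have hdiag : ∑ p ∈ Finset.univ.filter (fun p : ι × ι => p.1 = p.2), f p
          = ∑ i, (B i i : ZMod 2) * (m i : ZMod 2) := by
        refine Finset.sum_nbij' (fun p => p.1) (fun i => (i, i)) ?_ ?_ ?_ ?_ ?_
        · intro p _; exact Finset.mem_univ _
        · intro i _; exact Finset.mem_filter.2 ⟨Finset.mem_univ _, rfl⟩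
        · intro p hp
          exact Prod.ext rfl (Finset.mem_filter.1 hp).2
        · intro i _; rfl
        · intro p hp
          have h := (Finset.mem_filter.1 hp).2
          simp only [hf]
          rw [← h]
          have hmm : (m p.1 : ZMod 2) * (m p.1 : ZMod 2) = (m p.1 : ZMod 2) :=
            (by decide : ∀ x : ZMod 2, x * x = x) _
          calc (m p.1 : ZMod 2) * (B p.1 p.1 : ZMod 2) * (m p.1 : ZMod 2)
              = (B p.1 p.1 : ZMod 2) * ((m p.1 : ZMod 2) * (m p.1 : ZMod 2)) := by ring
            _ = (B p.1 p.1 : ZMod 2) * (m p.1 : ZMod 2) := by rw [hmm]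
      rw [hoff, hdiag, add_zero]
    exact key.symm
  obtain ⟨k, hk⟩ := h2
  exact ⟨k, hk⟩

end Aux2
section Aux3

variable {ι : Type} [Fintype ι] [DecidableEq ι]

lemma exists_int_rep {x : ι → ℚ} (hx : x ∈ intVecs ι) :
    ∃ m : ι → ℤ, x = fun i => (m i : ℚ) :=
  ⟨fun i => (hx i).choose, funext fun i => (hx i).choose_spec⟩

lemma qform_intCast (B : Matrix ι ι ℤ) (m m' : ι → ℤ) :
    qform B (fun i => (m i : ℚ)) (fun i => (m' i : ℚ))
      = ((∑ i, ∑ j, m i * B i j * m' j : ℤ) : ℚ) := by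
  rw [qform_apply]
  push_cast
  refine Finset.sum_congr rfl fun i _ => ?_
  rw [Finset.mul_sum]
  exact Finset.sum_congr rfl fun j _ => by ring

/-- The canonical characteristic covector `B⁻¹ · diag(B)`. -/
noncomputable def chiB (B : Matrix ι ι ℤ) : ι → ℚ :=
  (B.map (Int.cast : ℤ → ℚ))⁻¹ *ᵥ fun i => ((B i i : ℤ) : ℚ)

lemma chiB_qform {B : Matrix ι ι ℤ} (hB : B.IsSymm) (hd : B.det ≠ 0) (z : ι → ℚ) :
    qform B (chiB B) z = ∑ i, (B i i : ℚ) * z i :=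
  qform_inv_mulVec hB hd _ z

lemma chiB_mem_char {B : Matrix ι ι ℤ} (hB : B.IsSymm) (hd : B.det ≠ 0) :
    chiB B ∈ CharOf B (intVecs ι) := by
  refine ⟨inv_mulVec_mem_dual hB hd (fun i => isInt_intCast _), ?_⟩
  intro y hy
  obtain ⟨mv, rfl⟩ := exists_int_rep hy
  obtain ⟨k, hk⟩ := diag_parity hB mv
  refine ⟨k, ?_⟩
  rw [chiB_qform hB hd, qform_intCast]
  calc (∑ i, (B i i : ℚ) * (mv i : ℚ)) - ((∑ i, ∑ j, mv i * B i j * mv j : ℤ) : ℚ)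
      = (((∑ i, B i i * mv i - ∑ i, ∑ j, mv i * B i j * mv j : ℤ)) : ℚ) := by push_cast; ring
    _ = 2 * (k : ℚ) := by rw [hk]; push_cast; ring

lemma char_add_two_smul {B : Matrix ι ι ℤ} {χ x : ι → ℚ}
    (hχ : χ ∈ CharOf B (intVecs ι)) (hx : x ∈ dualOf B (intVecs ι)) :
    χ + (2 : ℚ) • x ∈ CharOf B (intVecs ι) := by
  have h2x : (2 : ℚ) • x ∈ dualOf B (intVecs ι) := by
    rw [two_smul]; exact (dualOf B (intVecs ι)).add_mem hx hx
  refine ⟨(dualOf B (intVecs ι)).add_mem hχ.1 h2x, ?_⟩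
  intro y hy
  obtain ⟨m, hm⟩ := hχ.2 y hy
  obtain ⟨a, ha⟩ := hx.2 y hy
  refine ⟨m + a, ?_⟩
  rw [qform_add_left, qform_smul_left]
  push_cast
  linarith [hm, ha]

lemma char_diff {B : Matrix ι ι ℤ} {χ χ' : ι → ℚ}
    (hχ : χ ∈ CharOf B (intVecs ι)) (hχ' : χ' ∈ CharOf B (intVecs ι)) :
    ∃ x ∈ dualOf B (intVecs ι), χ' = χ + (2 : ℚ) • x := by
  refine ⟨(2 : ℚ)⁻¹ • (χ' - χ), ?_, ?_⟩
  · rw [mem_dual_iff]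
    intro y hy
    obtain ⟨m, hm⟩ := hχ.2 y hy
    obtain ⟨m', hm'⟩ := hχ'.2 y hy
    rw [qform_smul_left, qform_sub_left]
    exact ⟨m' - m, by push_cast; linarith [hm, hm']⟩
  · rw [smul_smul]
    norm_num

lemma qq_shift {B : Matrix ι ι ℤ} (hB : B.IsSymm) {χ x t : ι → ℚ}
    (hχ : χ ∈ CharOf B (intVecs ι)) (hx : x ∈ dualOf B (intVecs ι))
    (ht : t ∈ intVecs ι) :
    ∃ k : ℤ, (qform B χ (x + t) + qform B (x + t) (x + t))
      - (qform B χ x + qform B x x) = 2 * (k : ℚ) := by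
  have h1 : qform B χ (x + t) = qform B χ x + qform B χ t := qform_add_right ..
  have h2 : qform B (x + t) (x + t)
      = qform B x x + qform B x t + (qform B t x + qform B t t) := by
    rw [qform_add_left, qform_add_right, qform_add_right]
  have h3 : qform B t x = qform B x t := qform_symm hB ..
  obtain ⟨m, hm⟩ := hχ.2 t ht
  obtain ⟨a, ha⟩ := hx.2 t ht
  obtain ⟨b, hb⟩ := (intVecs_mem_dual (B := B) ht).2 t ht
  refine ⟨m + b + a, ?_⟩
  rw [h1, h2, h3]
  push_cast
  linarith [hm, ha, hb]

lemma mem_latIn_iff {B : Matrix ι ι ℤ} {x : dualOf B (intVecs ι)} :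
    x ∈ latIn B (intVecs ι) ↔ (x : ι → ℚ) ∈ intVecs ι := by
  let K : AddSubgroup (dualOf B (intVecs ι)) :=
    { carrier := {y | (y : ι → ℚ) ∈ intVecs ι}
      zero_mem' := intVecs_zero
      add_mem' := fun ha hb => intVecs_add ha hb
      neg_mem' := fun ha => intVecs_neg ha }
  have h : latIn B (intVecs ι) = K := AddSubgroup.closure_eq K
  rw [h]
  exact Iff.rfl

lemma dmk_eq_dmk_iff {B : Matrix ι ι ℤ} {x y : ι → ℚ}
    (hx : x ∈ dualOf B (intVecs ι)) (hy : y ∈ dualOf B (intVecs ι)) :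
    dmk B (intVecs ι) hx = dmk B (intVecs ι) hy ↔ y - x ∈ intVecs ι := by
  unfold dmk
  change ((⟨x, hx⟩ : dualOf B (intVecs ι)) : dualOf B (intVecs ι) ⧸ latIn B (intVecs ι))
    = ((⟨y, hy⟩ : dualOf B (intVecs ι)) : dualOf B (intVecs ι) ⧸ latIn B (intVecs ι)) ↔ _
  rw [QuotientAddGroup.eq, mem_latIn_iff]
  have hco : ((-(⟨x, hx⟩ : dualOf B (intVecs ι)) + ⟨y, hy⟩ : dualOf B (intVecs ι)) : ι → ℚ)
      = y - x := by
    push_cast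
    rw [neg_add_eq_sub]
  rw [hco]

lemma dmk_add {B : Matrix ι ι ℤ} {x y : ι → ℚ}
    (hx : x ∈ dualOf B (intVecs ι)) (hy : y ∈ dualOf B (intVecs ι))
    (hxy : x + y ∈ dualOf B (intVecs ι)) :
    dmk B (intVecs ι) hxy = dmk B (intVecs ι) hx + dmk B (intVecs ι) hy := rfl

lemma dmk_sub {B : Matrix ι ι ℤ} {x y : ι → ℚ}
    (hx : x ∈ dualOf B (intVecs ι)) (hy : y ∈ dualOf B (intVecs ι))
    (hxy : x - y ∈ dualOf B (intVecs ι)) :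
    dmk B (intVecs ι) hxy = dmk B (intVecs ι) hx - dmk B (intVecs ι) hy := by
  unfold dmk
  change ((⟨x - y, hxy⟩ : dualOf B (intVecs ι)) : dualOf B (intVecs ι) ⧸ latIn B (intVecs ι))
    = ((⟨x, hx⟩ : dualOf B (intVecs ι)) : dualOf B (intVecs ι) ⧸ latIn B (intVecs ι))
      - ((⟨y, hy⟩ : dualOf B (intVecs ι)) : dualOf B (intVecs ι) ⧸ latIn B (intVecs ι))
  rw [← QuotientAddGroup.mk_sub]
  exact congrArg _ (Subtype.ext rfl)

lemma dmk_zero {B : Matrix ι ι ℤ} (h0 : (0 : ι → ℚ) ∈ dualOf B (intVecs ι)) :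
    dmk B (intVecs ι) h0 = 0 := rfl

lemma exists_dmk_rep {B : Matrix ι ι ℤ} (d : disc B (intVecs ι)) :
    ∃ (y : ι → ℚ) (hy : y ∈ dualOf B (intVecs ι)), dmk B (intVecs ι) hy = d := by
  obtain ⟨w, rfl⟩ := QuotientAddGroup.mk_surjective d
  exact ⟨w.1, w.2, rfl⟩

end Aux3
section Aux4

variable {ι : Type} [Fintype ι] [DecidableEq ι]

lemma exists_signature {B : Matrix ι ι ℤ} (hB : B.IsSymm) (hd : B.det ≠ 0) :
    ∃ s : ℤ, IsSignatureOf B (intVecs ι) s := by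
  classical
  have hFq : ∀ x y : ι → ℚ,
      (Matrix.toBilin' (B.map (Int.cast : ℤ → ℚ))) x y = qform B x y :=
    fun x y => Matrix.toBilin'_apply' _ x y
  have hFsymm : LinearMap.IsSymm (Matrix.toBilin' (B.map (Int.cast : ℤ → ℚ))) := ⟨fun x y => by
    rw [RingHom.id_apply, hFq, hFq, qform_symm hB]⟩
  obtain ⟨v, hv⟩ := LinearMap.BilinForm.exists_orthogonal_basis hFsymm
  have hnd : (B.map (Int.cast : ℤ → ℚ)).Nondegenerate :=
    Matrix.nondegenerate_iff_det_ne_zero.2 (det_map_isUnit hd).ne_zero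
  have horth : ∀ i j, i ≠ j → qform B (v i) (v j) = 0 := by
    intro i j hij
    have h0 : (Matrix.toBilin' (B.map (Int.cast : ℤ → ℚ))) (v i) (v j) = 0 := hv hij
    rwa [hFq] at h0
  have hnz : ∀ i, qform B (v i) (v i) ≠ 0 := by
    intro i h0
    have hlin : ((Matrix.toBilin' (B.map (Int.cast : ℤ → ℚ))) (v i)) = 0 := by
      apply v.ext
      intro j
      rcases eq_or_ne i j with rfl | hij
      · rw [LinearMap.zero_apply, hFq]; exact h0
      · rw [LinearMap.zero_apply, hFq]; exact horth i j hij
    refine Module.Basis.ne_zero v i (hnd.eq_zero_of_ortho fun w => ?_)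
    have h2 : qform B (v i) w = 0 := by rw [← hFq, hlin, LinearMap.zero_apply]
    exact h2
  obtain ⟨p, q, σ, hσP⟩ : ∃ (p q : ℕ) (σ : Fin (p + q) ≃ Fin (Module.finrank ℚ (ι → ℚ))),
      ∀ i : Fin (p + q), ((i : ℕ) < p → 0 < qform B (v (σ i)) (v (σ i))) ∧
        (¬ (i : ℕ) < p → ¬ 0 < qform B (v (σ i)) (v (σ i))) := by
    set P : Fin (Module.finrank ℚ (ι → ℚ)) → Prop :=
      fun i => 0 < qform B (v i) (v i) with hP
    have hpq : Fintype.card {i // P i} + Fintype.card {i // ¬ P i}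
        = Module.finrank ℚ (ι → ℚ) := by
      have h1 := Fintype.card_congr (Equiv.sumCompl P)
      rw [Fintype.card_sum, Fintype.card_fin] at h1
      exact h1
    set e : Fin (Fintype.card {i // P i}) ⊕ Fin (Fintype.card {i // ¬ P i})
        ≃ Fin (Module.finrank ℚ (ι → ℚ)) :=
      ((Fintype.equivFin {i // P i}).symm.sumCongr (Fintype.equivFin {i // ¬ P i}).symm).trans
        (Equiv.sumCompl P) with he
    refine ⟨_, _, finSumFinEquiv.symm.trans e, ?_⟩
    intro i
    rcases h : finSumFinEquiv.symm i with a | b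
    · have hi : i = Fin.castAdd _ a := by
        have := congrArg finSumFinEquiv h
        rwa [Equiv.apply_symm_apply, finSumFinEquiv_apply_left] at this
      have hlt : (i : ℕ) < Fintype.card {i // P i} := by rw [hi]; exact a.2
      have hPσ : P ((finSumFinEquiv.symm.trans e) i) := by
        show P (e (finSumFinEquiv.symm i))
        rw [h, he]
        simp only [Equiv.trans_apply, Equiv.sumCongr_apply, Sum.map_inl,
          Equiv.sumCompl_apply_inl]
        exact ((Fintype.equivFin {i // P i}).symm a).2
      exact ⟨fun _ => hPσ, fun hc => absurd hlt hc⟩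
    · have hi : i = Fin.natAdd _ b := by
        have := congrArg finSumFinEquiv h
        rwa [Equiv.apply_symm_apply, finSumFinEquiv_apply_right] at this
      have hlt : ¬ (i : ℕ) < Fintype.card {i // P i} := by
        rw [hi]
        simp [Fin.natAdd]
      have hPσ : ¬ P ((finSumFinEquiv.symm.trans e) i) := by
        show ¬ P (e (finSumFinEquiv.symm i))
        rw [h, he]
        simp only [Equiv.trans_apply, Equiv.sumCongr_apply, Sum.map_inr,
          Equiv.sumCompl_apply_inr]
        exact ((Fintype.equivFin {i // ¬ P i}).symm b).2
      exact ⟨fun hc => absurd hc hlt, fun _ => hPσ⟩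
  refine ⟨(p : ℤ) - (q : ℤ), p, q, fun i => v (σ i), ?_, ?_, ?_, ?_, ?_, rfl⟩
  · intro i
    rw [span_intVecs]
    trivial
  · have hr : Set.range (fun i => v (σ i)) = Set.range v := by
      have h0 : (fun i => v (σ i)) = v ∘ σ := rfl
      rw [h0, Set.range_comp, σ.surjective.range_eq, Set.image_univ]
    rw [hr, v.span_eq, span_intVecs]
  · exact v.linearIndependent.comp σ σ.injective
  · intro i j hij
    exact horth _ _ (fun hc => hij (σ.injective hc))
  · intro i
    by_cases hip : (i : ℕ) < p
    · rw [if_pos hip]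
      exact (hσP i).1 hip
    · rw [if_neg hip]
      exact lt_of_le_of_ne (not_lt.1 ((hσP i).2 hip)) (hnz (σ i))

end Aux4
section Aux5

variable {ι : Type} [Fintype ι] [DecidableEq ι]
variable {ι' : Type} [Fintype ι'] [DecidableEq ι']

lemma dmk_eq_zero {B : Matrix ι ι ℤ} {x : ι → ℚ} (hx : x ∈ dualOf B (intVecs ι))
    (hxi : x ∈ intVecs ι) : dmk B (intVecs ι) hx = 0 := by
  have h0 := (dualOf B (intVecs ι)).zero_mem
  have : dmk B (intVecs ι) hx = dmk B (intVecs ι) h0 := by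
    rw [dmk_eq_dmk_iff]
    simpa using intVecs_neg hxi
  rw [this, dmk_zero]

lemma dmk_sub' {B : Matrix ι ι ℤ} {x y z : ι → ℚ}
    (hx : x ∈ dualOf B (intVecs ι)) (hy : y ∈ dualOf B (intVecs ι))
    (hz : z ∈ dualOf B (intVecs ι)) (h : z = x - y) :
    dmk B (intVecs ι) hz = dmk B (intVecs ι) hx - dmk B (intVecs ι) hy := by
  subst h
  exact dmk_sub hx hy hz

lemma dmk_add' {B : Matrix ι ι ℤ} {x y z : ι → ℚ}
    (hx : x ∈ dualOf B (intVecs ι)) (hy : y ∈ dualOf B (intVecs ι))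
    (hz : z ∈ dualOf B (intVecs ι)) (h : z = x + y) :
    dmk B (intVecs ι) hz = dmk B (intVecs ι) hx + dmk B (intVecs ι) hy := by
  subst h
  exact dmk_add hx hy hz

lemma span_top_of_singles {S : Set (ι → ℚ)} (h : ∀ k, Pi.single k (1 : ℚ) ∈ S) :
    Submodule.span ℚ S = ⊤ := by
  rw [eq_top_iff]
  intro x _
  rw [pi_eq_sum_univ x]
  refine Submodule.sum_mem _ fun i _ => Submodule.smul_mem _ _ ?_
  refine Submodule.subset_span ?_
  rw [ite_single_eq]
  exact h i

lemma qform_fromBlocks (B₁ : Matrix ι ι ℤ) (B₂ : Matrix ι' ι' ℤ)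
    (x₁ x₂ : ι → ℚ) (y₁ y₂ : ι' → ℚ) :
    qform (Matrix.fromBlocks B₁ 0 0 B₂) (Sum.elim x₁ y₁) (Sum.elim x₂ y₂)
      = qform B₁ x₁ x₂ + qform B₂ y₁ y₂ := by
  unfold qform
  rw [Matrix.fromBlocks_map, Matrix.map_zero _ Int.cast_zero,
    Matrix.map_zero _ Int.cast_zero, Matrix.fromBlocks_mulVec]
  simp only [Sum.elim_comp_inl, Sum.elim_comp_inr, Matrix.zero_mulVec, add_zero, zero_add]
  rw [sumElim_dotProduct_sumElim]

lemma sum_elim_comp_self (w : ι ⊕ ι' → ℚ) : Sum.elim (w ∘ Sum.inl) (w ∘ Sum.inr) = w :=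
  Sum.elim_comp_inl_inr w

lemma qform_glue (L₁ L₂ : IntLattice) (w w' : Fin L₁.n ⊕ Fin L₂.n → ℚ) :
    qform (glueGram L₁ L₂) w w' = qform L₁.B (w ∘ Sum.inl) (w' ∘ Sum.inl)
      + qform L₂.B (w ∘ Sum.inr) (w' ∘ Sum.inr) := by
  have h := qform_fromBlocks L₁.B L₂.B (w ∘ Sum.inl) (w' ∘ Sum.inl)
    (w ∘ Sum.inr) (w' ∘ Sum.inr)
  rw [sum_elim_comp_self w, sum_elim_comp_self w'] at h
  exact h

end Aux5
section Aux6

/-- The heart of the theorem: if `ψ` matches classes as in the torsor isomorphism, and the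
ρ-invariants are compatible with `ε = -1`, then the mixed pairing is integral on the graph. -/
lemma glue_pair_int (L₁ L₂ : IntLattice)
    (Φ : (Fin L₁.n → ℚ) → (Fin L₂.n → ℚ))
    (ψ : disc L₁.B (intVecs (Fin L₁.n)) ≃+ disc L₂.B (intVecs (Fin L₂.n)))
    (hiso : TorsorMapIso L₁.B (intVecs (Fin L₁.n)) L₂.B (intVecs (Fin L₂.n)) Φ ψ)
    (hrho : RhoCompat L₁.B (intVecs (Fin L₁.n)) L₂.B (intVecs (Fin L₂.n)) (-1) Φ) :
    ∀ (x : Fin L₁.n → ℚ) (hx : x ∈ dualOf L₁.B (intVecs (Fin L₁.n)))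
      (y : Fin L₂.n → ℚ) (hy : y ∈ dualOf L₂.B (intVecs (Fin L₂.n))),
      ψ (dmk _ _ hx) = dmk _ _ hy →
      ∀ (x' : Fin L₁.n → ℚ) (hx' : x' ∈ dualOf L₁.B (intVecs (Fin L₁.n)))
        (y' : Fin L₂.n → ℚ) (hy' : y' ∈ dualOf L₂.B (intVecs (Fin L₂.n))),
        ψ (dmk _ _ hx') = dmk _ _ hy' →
        isInt (qform L₁.B x x' + qform L₂.B y y') := by
  obtain ⟨s₁, hs₁⟩ := exists_signature L₁.symm L₁.nondeg
  obtain ⟨s₂, hs₂⟩ := exists_signature L₂.symm L₂.nondeg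
  have hχ₁ : chiB L₁.B ∈ CharOf L₁.B (intVecs (Fin L₁.n)) :=
    chiB_mem_char L₁.symm L₁.nondeg
  set χ₁ := chiB L₁.B with hχ₁def
  have hχ₂ : Φ χ₁ ∈ CharOf L₂.B (intVecs (Fin L₂.n)) := hiso.1 _ hχ₁
  -- The quadratic identity on the graph of ψ
  have star : ∀ (x : Fin L₁.n → ℚ) (hx : x ∈ dualOf L₁.B (intVecs (Fin L₁.n)))
      (y : Fin L₂.n → ℚ) (hy : y ∈ dualOf L₂.B (intVecs (Fin L₂.n))),
      ψ (dmk _ _ hx) = dmk _ _ hy →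
      ∃ k : ℤ, (qform L₁.B χ₁ x + qform L₁.B x x)
        + (qform L₂.B (Φ χ₁) y + qform L₂.B y y) = 2 * (k : ℚ) := by
    intro x hx y hy hψeq
    have hχ' : χ₁ + (2 : ℚ) • x ∈ CharOf L₁.B (intVecs (Fin L₁.n)) :=
      char_add_two_smul hχ₁ hx
    have hΦχ' : Φ (χ₁ + (2 : ℚ) • x) ∈ CharOf L₂.B (intVecs (Fin L₂.n)) := hiso.1 _ hχ'
    obtain ⟨y₀, hy₀d, hy₀⟩ := char_diff hχ₂ hΦχ'
    have hψ0 : ψ (dmk _ _ hx) = dmk _ _ hy₀d :=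
      hiso.2.2.2 χ₁ hχ₁ _ hχ' x y₀ hx hy₀d rfl hy₀
    have ht : y - y₀ ∈ intVecs (Fin L₂.n) :=
      (dmk_eq_dmk_iff hy₀d hy).1 (hψ0.symm.trans hψeq)
    obtain ⟨m₀, hm₀⟩ := hrho χ₁ hχ₁ s₁ s₂ hs₁ hs₂
    obtain ⟨m₂, hm₂⟩ := hrho _ hχ' s₁ s₂ hs₁ hs₂
    have e₁ : qform L₁.B (χ₁ + (2 : ℚ) • x) (χ₁ + (2 : ℚ) • x)
        = qform L₁.B χ₁ χ₁ + 4 * qform L₁.B χ₁ x + 4 * qform L₁.B x x := by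
      rw [qform_add_left, qform_add_right, qform_add_right, qform_smul_left,
        qform_smul_left, qform_smul_right, qform_smul_right, qform_symm L₁.symm x χ₁]
      ring
    have e₂ : qform L₂.B (Φ (χ₁ + (2 : ℚ) • x)) (Φ (χ₁ + (2 : ℚ) • x))
        = qform L₂.B (Φ χ₁) (Φ χ₁) + 4 * qform L₂.B (Φ χ₁) y₀ + 4 * qform L₂.B y₀ y₀ := by
      rw [hy₀, qform_add_left, qform_add_right, qform_add_right, qform_smul_left,
        qform_smul_left, qform_smul_right, qform_smul_right, qform_symm L₂.symm y₀ (Φ χ₁)]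
      ring
    have hqq0 : (qform L₁.B χ₁ x + qform L₁.B x x)
        + (qform L₂.B (Φ χ₁) y₀ + qform L₂.B y₀ y₀) = 2 * ((m₂ - m₀ : ℤ) : ℚ) := by
      rw [e₁, e₂] at hm₂
      push_cast at hm₂ hm₀ ⊢
      linarith [hm₂, hm₀]
    obtain ⟨k, hk⟩ := qq_shift L₂.symm hχ₂ hy₀d ht
    have hyy : y₀ + (y - y₀) = y := by ring
    rw [hyy] at hk
    refine ⟨m₂ - m₀ + k, ?_⟩
    push_cast
    linarith [hqq0, hk]
  -- Polarization
  intro x hx y hy hψeq x' hx' y' hy' hψeq'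
  have hxx' : x + x' ∈ dualOf L₁.B (intVecs (Fin L₁.n)) :=
    (dualOf _ _).add_mem hx hx'
  have hyy' : y + y' ∈ dualOf L₂.B (intVecs (Fin L₂.n)) :=
    (dualOf _ _).add_mem hy hy'
  have hψs : ψ (dmk _ _ hxx') = dmk _ _ hyy' := by
    rw [dmk_add hx hx' hxx', dmk_add hy hy' hyy', map_add, hψeq, hψeq']
  obtain ⟨k₁, h1⟩ := star x hx y hy hψeq
  obtain ⟨k₂, h2⟩ := star x' hx' y' hy' hψeq'
  obtain ⟨k₃, h3⟩ := star (x + x') hxx' (y + y') hyy' hψs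
  have ex1 : qform L₁.B χ₁ (x + x') = qform L₁.B χ₁ x + qform L₁.B χ₁ x' :=
    qform_add_right ..
  have ex2 : qform L₁.B (x + x') (x + x')
      = qform L₁.B x x + 2 * qform L₁.B x x' + qform L₁.B x' x' := by
    rw [qform_add_left, qform_add_right, qform_add_right, qform_symm L₁.symm x' x]
    ring
  have ey1 : qform L₂.B (Φ χ₁) (y + y') = qform L₂.B (Φ χ₁) y + qform L₂.B (Φ χ₁) y' :=
    qform_add_right ..
  have ey2 : qform L₂.B (y + y') (y + y')
      = qform L₂.B y y + 2 * qform L₂.B y y' + qform L₂.B y' y' := by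
    rw [qform_add_left, qform_add_right, qform_add_right, qform_symm L₂.symm y' y]
    ring
  refine ⟨k₃ - k₁ - k₂, ?_⟩
  rw [ex1, ex2, ey1, ey2] at h3
  push_cast at h1 h2 h3 ⊢
  linarith [h1, h2, h3]

end Aux6
section Aux7

variable (L₁ L₂ : IntLattice)

lemma single_inl_comp_inl (i : Fin L₁.n) :
    (Pi.single (Sum.inl i : Fin L₁.n ⊕ Fin L₂.n) (1 : ℚ)) ∘ Sum.inl = Pi.single i 1 := by
  funext j
  simp [Function.comp, Pi.single_apply, Sum.inl.injEq]

lemma single_inl_comp_inr (i : Fin L₁.n) :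
    (Pi.single (Sum.inl i : Fin L₁.n ⊕ Fin L₂.n) (1 : ℚ)) ∘ Sum.inr = 0 := by
  funext j
  exact Pi.single_eq_of_ne (by simp) 1

lemma single_inr_comp_inr (j : Fin L₂.n) :
    (Pi.single (Sum.inr j : Fin L₁.n ⊕ Fin L₂.n) (1 : ℚ)) ∘ Sum.inr = Pi.single j 1 := by
  funext k
  simp [Function.comp, Pi.single_apply, Sum.inr.injEq]

lemma single_inr_comp_inl (j : Fin L₂.n) :
    (Pi.single (Sum.inr j : Fin L₁.n ⊕ Fin L₂.n) (1 : ℚ)) ∘ Sum.inl = 0 := by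
  funext k
  exact Pi.single_eq_of_ne (by simp) 1

lemma single_inl_mem_inlLat (i : Fin L₁.n) :
    Pi.single (Sum.inl i : Fin L₁.n ⊕ Fin L₂.n) (1 : ℚ) ∈ inlLat L₁ L₂ := by
  constructor
  · rw [single_inl_comp_inl]
    exact single_mem_intVecs i
  · exact single_inl_comp_inr L₁ L₂ i

lemma single_inr_mem_inrLat (j : Fin L₂.n) :
    Pi.single (Sum.inr j : Fin L₁.n ⊕ Fin L₂.n) (1 : ℚ) ∈ inrLat L₁ L₂ := by
  constructor
  · rw [single_inr_comp_inr]
    exact single_mem_intVecs j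
  · exact single_inr_comp_inl L₁ L₂ j

variable (ψ : disc L₁.B (intVecs (Fin L₁.n)) ≃+ disc L₂.B (intVecs (Fin L₂.n)))

lemma inlLat_subset_glue : inlLat L₁ L₂ ⊆ glueSet L₁ L₂ ψ := by
  rintro w ⟨h1, h2⟩
  have hd1 : w ∘ Sum.inl ∈ dualOf L₁.B (intVecs (Fin L₁.n)) := intVecs_mem_dual h1
  have hd2 : w ∘ Sum.inr ∈ dualOf L₂.B (intVecs (Fin L₂.n)) := by
    rw [h2]; exact (dualOf _ _).zero_mem
  refine ⟨hd1, hd2, ?_⟩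
  rw [dmk_eq_zero hd1 h1, map_zero, dmk_eq_zero hd2 (by rw [h2]; exact intVecs_zero)]

lemma inrLat_subset_glue : inrLat L₁ L₂ ⊆ glueSet L₁ L₂ ψ := by
  rintro w ⟨h1, h2⟩
  have hd2 : w ∘ Sum.inr ∈ dualOf L₂.B (intVecs (Fin L₂.n)) := intVecs_mem_dual h1
  have hd1 : w ∘ Sum.inl ∈ dualOf L₁.B (intVecs (Fin L₁.n)) := by
    rw [h2]; exact (dualOf _ _).zero_mem
  refine ⟨hd1, hd2, ?_⟩
  rw [dmk_eq_zero hd1 (by rw [h2]; exact intVecs_zero), map_zero, dmk_eq_zero hd2 h1]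

lemma span_glue_top : Submodule.span ℚ (glueSet L₁ L₂ ψ) = ⊤ := by
  apply span_top_of_singles
  intro k
  cases k with
  | inl i => exact inlLat_subset_glue L₁ L₂ ψ (single_inl_mem_inlLat L₁ L₂ i)
  | inr j => exact inrLat_subset_glue L₁ L₂ ψ (single_inr_mem_inrLat L₁ L₂ j)

lemma span_inlLat :
    Submodule.span ℚ (inlLat L₁ L₂)
      = LinearMap.ker (LinearMap.funLeft ℚ ℚ (Sum.inr : Fin L₂.n → Fin L₁.n ⊕ Fin L₂.n)) := by
  apply le_antisymm
  · rw [Submodule.span_le]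
    rintro w ⟨_, h2⟩
    exact LinearMap.mem_ker.2 h2
  · intro w hw
    have hw2 : w ∘ Sum.inr = 0 := LinearMap.mem_ker.1 hw
    have hrep : w = ∑ i : Fin L₁.n, w (Sum.inl i) • (Pi.single (Sum.inl i) (1 : ℚ) : Fin L₁.n ⊕ Fin L₂.n → ℚ) := by
      funext k
      rw [Finset.sum_apply]
      cases k with
      | inl a =>
        have : ∀ i : Fin L₁.n,
            (w (Sum.inl i) • (Pi.single (Sum.inl i) (1 : ℚ) : Fin L₁.n ⊕ Fin L₂.n → ℚ)) (Sum.inl a)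
              = if a = i then w (Sum.inl i) else 0 := by
          intro i
          simp [Pi.single_apply, Sum.inl.injEq, eq_comm]
        simp only [this]
        rw [Finset.sum_ite_eq]
        simp
      | inr b =>
        have : ∀ i : Fin L₁.n,
            (w (Sum.inl i) • (Pi.single (Sum.inl i) (1 : ℚ) : Fin L₁.n ⊕ Fin L₂.n → ℚ)) (Sum.inr b) = 0 := by
          intro i
          simp [Pi.single_eq_of_ne]
        simp only [this, Finset.sum_const_zero]
        exact congrFun hw2 b
    rw [hrep]
    exact Submodule.sum_mem _ fun i _ => Submodule.smul_mem _ _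
      (Submodule.subset_span (single_inl_mem_inlLat L₁ L₂ i))

lemma span_inrLat :
    Submodule.span ℚ (inrLat L₁ L₂)
      = LinearMap.ker (LinearMap.funLeft ℚ ℚ (Sum.inl : Fin L₁.n → Fin L₁.n ⊕ Fin L₂.n)) := by
  apply le_antisymm
  · rw [Submodule.span_le]
    rintro w ⟨_, h2⟩
    exact LinearMap.mem_ker.2 h2
  · intro w hw
    have hw2 : w ∘ Sum.inl = 0 := LinearMap.mem_ker.1 hw
    have hrep : w = ∑ j : Fin L₂.n, w (Sum.inr j) • (Pi.single (Sum.inr j) (1 : ℚ) : Fin L₁.n ⊕ Fin L₂.n → ℚ) := by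
      funext k
      rw [Finset.sum_apply]
      cases k with
      | inr a =>
        have : ∀ j : Fin L₂.n,
            (w (Sum.inr j) • (Pi.single (Sum.inr j) (1 : ℚ) : Fin L₁.n ⊕ Fin L₂.n → ℚ)) (Sum.inr a)
              = if a = j then w (Sum.inr j) else 0 := by
          intro j
          simp [Pi.single_apply, Sum.inr.injEq, eq_comm]
        simp only [this]
        rw [Finset.sum_ite_eq]
        simp
      | inl b =>
        have : ∀ j : Fin L₂.n,
            (w (Sum.inr j) • (Pi.single (Sum.inr j) (1 : ℚ) : Fin L₁.n ⊕ Fin L₂.n → ℚ)) (Sum.inl b) = 0 := by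
          intro j
          simp [Pi.single_eq_of_ne]
        simp only [this, Finset.sum_const_zero]
        exact congrFun hw2 b
    rw [hrep]
    exact Submodule.sum_mem _ fun j _ => Submodule.smul_mem _ _
      (Submodule.subset_span (single_inr_mem_inrLat L₁ L₂ j))

lemma rk_inlLat : rkOf (inlLat L₁ L₂) = L₁.n := by
  rw [rkOf, span_inlLat]
  set K := LinearMap.ker (LinearMap.funLeft ℚ ℚ (Sum.inr : Fin L₂.n → Fin L₁.n ⊕ Fin L₂.n))
    with hK
  let f : K →ₗ[ℚ] (Fin L₁.n → ℚ) :=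
    (LinearMap.funLeft ℚ ℚ Sum.inl).comp K.subtype
  have hinj : Function.Injective f := by
    intro a b h
    apply Subtype.ext
    funext k
    cases k with
    | inl i => exact congrFun h i
    | inr j =>
      have ha : (a : Fin L₁.n ⊕ Fin L₂.n → ℚ) ∘ Sum.inr = 0 := LinearMap.mem_ker.1 a.2
      have hb : (b : Fin L₁.n ⊕ Fin L₂.n → ℚ) ∘ Sum.inr = 0 := LinearMap.mem_ker.1 b.2
      rw [show (a : Fin L₁.n ⊕ Fin L₂.n → ℚ) (Sum.inr j) = 0 from congrFun ha j,
        show (b : Fin L₁.n ⊕ Fin L₂.n → ℚ) (Sum.inr j) = 0 from congrFun hb j]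
  have hsurj : Function.Surjective f := by
    intro x
    have hm : Sum.elim x (0 : Fin L₂.n → ℚ) ∈ K := LinearMap.mem_ker.2 rfl
    exact ⟨⟨Sum.elim x 0, hm⟩, rfl⟩
  have := LinearEquiv.finrank_eq (LinearEquiv.ofBijective f ⟨hinj, hsurj⟩)
  rw [this, Module.finrank_pi, Fintype.card_fin]

lemma rk_inrLat : rkOf (inrLat L₁ L₂) = L₂.n := by
  rw [rkOf, span_inrLat]
  set K := LinearMap.ker (LinearMap.funLeft ℚ ℚ (Sum.inl : Fin L₁.n → Fin L₁.n ⊕ Fin L₂.n))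
    with hK
  let f : K →ₗ[ℚ] (Fin L₂.n → ℚ) :=
    (LinearMap.funLeft ℚ ℚ Sum.inr).comp K.subtype
  have hinj : Function.Injective f := by
    intro a b h
    apply Subtype.ext
    funext k
    cases k with
    | inr i => exact congrFun h i
    | inl j =>
      have ha : (a : Fin L₁.n ⊕ Fin L₂.n → ℚ) ∘ Sum.inl = 0 := LinearMap.mem_ker.1 a.2
      have hb : (b : Fin L₁.n ⊕ Fin L₂.n → ℚ) ∘ Sum.inl = 0 := LinearMap.mem_ker.1 b.2
      rw [show (a : Fin L₁.n ⊕ Fin L₂.n → ℚ) (Sum.inl j) = 0 from congrFun ha j,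
        show (b : Fin L₁.n ⊕ Fin L₂.n → ℚ) (Sum.inl j) = 0 from congrFun hb j]
  have hsurj : Function.Surjective f := by
    intro x
    have hm : Sum.elim (0 : Fin L₁.n → ℚ) x ∈ K := LinearMap.mem_ker.2 rfl
    exact ⟨⟨Sum.elim 0 x, hm⟩, rfl⟩
  have := LinearEquiv.finrank_eq (LinearEquiv.ofBijective f ⟨hinj, hsurj⟩)
  rw [this, Module.finrank_pi, Fintype.card_fin]

lemma rk_glue : rkOf (glueSet L₁ L₂ ψ) = L₁.n + L₂.n := by
  rw [rkOf, span_glue_top, finrank_top, Module.finrank_pi, Fintype.card_sum,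
    Fintype.card_fin, Fintype.card_fin]

end Aux7
/-- Gluing two integral lattices along an isomorphism
`(C(Λ₁), ρ₁) → (C(Λ₂), −ρ₂)` of ρ-invariants yields an integral unimodular lattice
containing them as complementary primitive sublattices. -/
theorem stmt_7 (L₁ L₂ : IntLattice)
    (Φ : (Fin L₁.n → ℚ) → (Fin L₂.n → ℚ))
    (ψ : disc L₁.B (intVecs (Fin L₁.n)) ≃+ disc L₂.B (intVecs (Fin L₂.n)))
    (hiso : TorsorMapIso L₁.B (intVecs (Fin L₁.n)) L₂.B (intVecs (Fin L₂.n)) Φ ψ)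
    (hrho : RhoCompat L₁.B (intVecs (Fin L₁.n)) L₂.B (intVecs (Fin L₂.n)) (-1) Φ) :
    IsLat (glueSet L₁ L₂ ψ) ∧
    IntegralOn (glueGram L₁ L₂) (glueSet L₁ L₂ ψ) ∧
    UnimodularOn (glueGram L₁ L₂) (glueSet L₁ L₂ ψ) ∧
    inlLat L₁ L₂ ⊆ glueSet L₁ L₂ ψ ∧ inrLat L₁ L₂ ⊆ glueSet L₁ L₂ ψ ∧
    ComplementaryIn (glueGram L₁ L₂) (glueSet L₁ L₂ ψ) (inlLat L₁ L₂) (inrLat L₁ L₂) ∧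
    PrimitiveIn (glueGram L₁ L₂) (glueSet L₁ L₂ ψ) (inlLat L₁ L₂) ∧
    PrimitiveIn (glueGram L₁ L₂) (glueSet L₁ L₂ ψ) (inrLat L₁ L₂) := by
  have pair := glue_pair_int L₁ L₂ Φ ψ hiso hrho
  -- Integrality of the form on the glue lattice
  have hIntegral : IntegralOn (glueGram L₁ L₂) (glueSet L₁ L₂ ψ) := by
    rintro w ⟨hw1, hw2, hwe⟩ u ⟨hu1, hu2, hue⟩
    rw [qform_glue]
    exact pair _ hw1 _ hw2 hwe _ hu1 _ hu2 hue
  -- The glue set is a lattice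
  have hLat : IsLat (glueSet L₁ L₂ ψ) := by
    constructor
    · have hd1 : (0 : Fin L₁.n ⊕ Fin L₂.n → ℚ) ∘ Sum.inl ∈ dualOf L₁.B (intVecs (Fin L₁.n)) :=
        (dualOf _ _).zero_mem
      have hd2 : (0 : Fin L₁.n ⊕ Fin L₂.n → ℚ) ∘ Sum.inr ∈ dualOf L₂.B (intVecs (Fin L₂.n)) :=
        (dualOf _ _).zero_mem
      refine ⟨hd1, hd2, ?_⟩
      rw [dmk_eq_zero hd1 (fun _ => isInt_zero), map_zero,
        dmk_eq_zero hd2 (fun _ => isInt_zero)]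
    · rintro w ⟨hw1, hw2, hwe⟩ u ⟨hu1, hu2, hue⟩
      have hs1 : (w - u) ∘ Sum.inl ∈ dualOf L₁.B (intVecs (Fin L₁.n)) :=
        (dualOf _ _).sub_mem hw1 hu1
      have hs2 : (w - u) ∘ Sum.inr ∈ dualOf L₂.B (intVecs (Fin L₂.n)) :=
        (dualOf _ _).sub_mem hw2 hu2
      refine ⟨hs1, hs2, ?_⟩
      rw [dmk_sub' hw1 hu1 hs1 rfl, dmk_sub' hw2 hu2 hs2 rfl, map_sub, hwe, hue]
  -- Unimodularity
  have hUni : UnimodularOn (glueGram L₁ L₂) (glueSet L₁ L₂ ψ) := by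
    ext z
    simp only [SetLike.mem_coe]
    constructor
    · intro hz
      have hz1 : z ∘ Sum.inl ∈ dualOf L₁.B (intVecs (Fin L₁.n)) := by
        rw [mem_dual_iff]
        intro u hu
        have hmem : Sum.elim u (0 : Fin L₂.n → ℚ) ∈ glueSet L₁ L₂ ψ :=
          inlLat_subset_glue L₁ L₂ ψ ⟨hu, rfl⟩
        have hq := hz.2 _ hmem
        rw [qform_glue] at hq
        simp only [Sum.elim_comp_inl, Sum.elim_comp_inr] at hq
        rwa [qform_zero_right, add_zero] at hq
      have hz2 : z ∘ Sum.inr ∈ dualOf L₂.B (intVecs (Fin L₂.n)) := by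
        rw [mem_dual_iff]
        intro u hu
        have hmem : Sum.elim (0 : Fin L₁.n → ℚ) u ∈ glueSet L₁ L₂ ψ :=
          inrLat_subset_glue L₁ L₂ ψ ⟨hu, rfl⟩
        have hq := hz.2 _ hmem
        rw [qform_glue] at hq
        simp only [Sum.elim_comp_inl, Sum.elim_comp_inr] at hq
        rwa [qform_zero_right, zero_add] at hq
      obtain ⟨y', hy'd, hy'eq⟩ := exists_dmk_rep (ψ (dmk _ _ hz1))
      have hint : y' - z ∘ Sum.inr ∈ intVecs (Fin L₂.n) := by
        apply mem_intVecs_of_dual_pairing L₂.symm L₂.nondeg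
        intro u hu
        obtain ⟨x₀, hx₀, hdx⟩ := exists_dmk_rep (ψ.symm (dmk _ _ hu))
        have hψx₀ : ψ (dmk _ _ hx₀) = dmk _ _ hu := by
          rw [hdx]; exact ψ.apply_symm_apply _
        have hmem : Sum.elim x₀ u ∈ glueSet L₁ L₂ ψ := ⟨hx₀, hu, hψx₀⟩
        have hA := hz.2 _ hmem
        rw [qform_glue] at hA
        simp only [Sum.elim_comp_inl, Sum.elim_comp_inr] at hA
        have hB := pair _ hz1 _ hy'd hy'eq.symm _ hx₀ _ hu hψx₀
        have hcalc : qform L₂.B (y' - z ∘ Sum.inr) u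
            = (qform L₁.B (z ∘ Sum.inl) x₀ + qform L₂.B y' u)
              - (qform L₁.B (z ∘ Sum.inl) x₀ + qform L₂.B (z ∘ Sum.inr) u) := by
          rw [qform_sub_left]; ring
        rw [hcalc]
        exact isInt_sub hB hA
      refine ⟨hz1, hz2, ?_⟩
      rw [← hy'eq]
      refine (dmk_eq_dmk_iff hy'd hz2).2 ?_
      have hneg := intVecs_neg hint
      rwa [neg_sub] at hneg
    · intro hz
      exact ⟨by rw [span_glue_top]; trivial, fun u hu => hIntegral _ hz _ hu⟩
  -- Orthogonality
  have hOrth : OrthogonalSets (glueGram L₁ L₂) (inlLat L₁ L₂) (inrLat L₁ L₂) := by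
    rintro w ⟨_, hw2⟩ u ⟨_, hu2⟩
    rw [qform_glue, hw2, hu2, qform_zero_right, qform_zero_left, add_zero]
  -- Primitivity of the first factor
  have hPrimL : PrimitiveIn (glueGram L₁ L₂) (glueSet L₁ L₂ ψ) (inlLat L₁ L₂) := by
    intro x hx
    have hx1 : x ∘ Sum.inl ∈ dualOf L₁.B (intVecs (Fin L₁.n)) := by
      rw [mem_dual_iff]
      intro u hu
      have hmem : Sum.elim u (0 : Fin L₂.n → ℚ) ∈ inlLat L₁ L₂ := ⟨hu, rfl⟩
      have hq := hx.2 _ hmem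
      rw [qform_glue] at hq
      simp only [Sum.elim_comp_inl, Sum.elim_comp_inr] at hq
      rwa [qform_zero_right, add_zero] at hq
    obtain ⟨y', hy'd, hy'eq⟩ := exists_dmk_rep (ψ (dmk _ _ hx1))
    have hzg : Sum.elim (x ∘ Sum.inl) y' ∈ glueSet L₁ L₂ ψ := ⟨hx1, hy'd, hy'eq.symm⟩
    refine ⟨Sum.elim (x ∘ Sum.inl) y',
      ⟨by rw [span_glue_top]; trivial, fun u hu => hIntegral _ hzg _ hu⟩, ?_⟩
    intro u hu
    rw [qform_glue, qform_glue, hu.2]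
    simp only [Sum.elim_comp_inl, Sum.elim_comp_inr]
    rw [qform_zero_right, qform_zero_right]
  -- Primitivity of the second factor
  have hPrimR : PrimitiveIn (glueGram L₁ L₂) (glueSet L₁ L₂ ψ) (inrLat L₁ L₂) := by
    intro x hx
    have hx2 : x ∘ Sum.inr ∈ dualOf L₂.B (intVecs (Fin L₂.n)) := by
      rw [mem_dual_iff]
      intro u hu
      have hmem : Sum.elim (0 : Fin L₁.n → ℚ) u ∈ inrLat L₁ L₂ := ⟨hu, rfl⟩
      have hq := hx.2 _ hmem
      rw [qform_glue] at hq
      simp only [Sum.elim_comp_inl, Sum.elim_comp_inr] at hq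
      rwa [qform_zero_right, zero_add] at hq
    obtain ⟨x₀, hx₀, hdx⟩ := exists_dmk_rep (ψ.symm (dmk _ _ hx2))
    have hψx₀ : ψ (dmk _ _ hx₀) = dmk _ _ hx2 := by
      rw [hdx]; exact ψ.apply_symm_apply _
    have hzg : Sum.elim x₀ (x ∘ Sum.inr) ∈ glueSet L₁ L₂ ψ := ⟨hx₀, hx2, hψx₀⟩
    refine ⟨Sum.elim x₀ (x ∘ Sum.inr),
      ⟨by rw [span_glue_top]; trivial, fun u hu => hIntegral _ hzg _ hu⟩, ?_⟩
    intro u hu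
    rw [qform_glue, qform_glue, hu.2]
    simp only [Sum.elim_comp_inl, Sum.elim_comp_inr]
    rw [qform_zero_right, qform_zero_right]
  refine ⟨hLat, hIntegral, hUni, inlLat_subset_glue L₁ L₂ ψ, inrLat_subset_glue L₁ L₂ ψ,
    ⟨hOrth, ?_⟩, hPrimL, hPrimR⟩
  rw [rk_inlLat, rk_inrLat, rk_glue]

end Greene
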